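/- Suppose K ∈ C^1(∂B_1) with K(ξ) = ξ_n + 2, where ξ_n is the last coordinate. Then the integral equation K(η) v(η)^{n/(n-2)} = ∫_{B_1} P(η, ξ) (Pv(ξ))^{(n+2)/(n-2)} dξ has no positive solution v ∈ C(∂B_1), because every solution must satisfy the Kazdan–Warner identity ∫_{∂B_1} (∇_X K) v^{2(n-1)/(n-2)} ds = 0 for all conformal Killing fields X on the sphere, which fails for this K. -/

import Mathlib

open MeasureTheory Metric
open scoped NNReal ENNReal

set_option maxHeartbeats 1000000


lemma aux_normsq (k : ℕ) (x : EuclideanSpace ℝ (Fin k)) : ‖x‖ ^ 2 = ∑ j, x j ^ 2 := by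
  rw [EuclideanSpace.norm_eq, Real.sq_sqrt (by positivity)]
  simp [sq_abs]

lemma aux_distsq (k : ℕ) (x y : EuclideanSpace ℝ (Fin k)) :
    dist x y ^ 2 = ∑ j, (x j - y j) ^ 2 := by
  rw [EuclideanSpace.dist_eq, Real.sq_sqrt (by positivity)]
  simp [Real.dist_eq, sq_abs]

noncomputable def capMap (k : ℕ) (i : Fin (k+1)) (ε : ℝ) (x : EuclideanSpace ℝ (Fin k)) :
    EuclideanSpace ℝ (Fin (k+1)) :=
  WithLp.toLp 2 (i.insertNth (ε * Real.sqrt (1 - ‖x‖ ^ 2)) (WithLp.ofLp x))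

lemma aux_sqrt_diff (k : ℕ) (u w : ℝ) (hu : (1:ℝ)/(k+1) ≤ u) (hw : (1:ℝ)/(k+1) ≤ w)
    (hu1 : u ≤ 1) (hw1 : w ≤ 1) :
    (Real.sqrt u - Real.sqrt w) ^ 2 ≤ ((k:ℝ)+1) * (u - w) ^ 2 := by
  set c : ℝ := 1/(k+1) with hc
  have hcpos : 0 < c := by positivity
  have hu0 : 0 ≤ u := le_trans hcpos.le hu
  have hw0 : 0 ≤ w := le_trans hcpos.le hw
  set su := Real.sqrt u with hsu
  set sw := Real.sqrt w with hsw
  have hsu2 : su ^ 2 = u := Real.sq_sqrt hu0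
  have hsw2 : sw ^ 2 = w := Real.sq_sqrt hw0
  have hsu0 : 0 ≤ su := Real.sqrt_nonneg u
  have hsw0 : 0 ≤ sw := Real.sqrt_nonneg w
  have hsuc : Real.sqrt c ≤ su := Real.sqrt_le_sqrt hu
  have hswc : Real.sqrt c ≤ sw := Real.sqrt_le_sqrt hw
  have hsc2 : Real.sqrt c ^ 2 = c := Real.sq_sqrt hcpos.le
  have hscpos : 0 < Real.sqrt c := Real.sqrt_pos.mpr hcpos
  have key : (su - sw) * (su + sw) = u - w := by linear_combination hsu2 - hsw2
  have h4 : (su - sw) ^ 2 * (su + sw) ^ 2 = (u - w) ^ 2 := by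
    rw [← mul_pow, key]
  have h5 : 4 * c ≤ (su + sw) ^ 2 := by nlinarith
  have hck : c * ((k:ℝ)+1) = 1 := by
    rw [hc]; field_simp
  nlinarith [sq_nonneg (su - sw), sq_nonneg (u - w)]

lemma aux_capMap_lip (k : ℕ) (hk : 1 ≤ k) (i : Fin (k+1)) (ε : ℝ) (hε : ε = 1 ∨ ε = -1) :
    LipschitzOnWith ((k:ℝ≥0)+2) (capMap k i ε)
      {x : EuclideanSpace ℝ (Fin k) | ‖x‖ ^ 2 ≤ (k:ℝ)/((k:ℝ)+1)} := by
  rw [lipschitzOnWith_iff_dist_le_mul]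
  intro x hx y hy
  set a := ‖x‖ with ha
  set b := ‖y‖ with hb
  have hxk : a ^ 2 ≤ (k:ℝ)/((k:ℝ)+1) := hx
  have hyk : b ^ 2 ≤ (k:ℝ)/((k:ℝ)+1) := hy
  have hk1 : (k:ℝ)/((k:ℝ)+1) ≤ 1 := by
    rw [div_le_one (by positivity)]; linarith
  have hu : (1:ℝ)/(k+1) ≤ 1 - a ^ 2 := by
    have : (k:ℝ)/((k:ℝ)+1) + 1/((k:ℝ)+1) = 1 := by field_simp
    linarith
  have hw : (1:ℝ)/(k+1) ≤ 1 - b ^ 2 := by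
    have : (k:ℝ)/((k:ℝ)+1) + 1/((k:ℝ)+1) = 1 := by field_simp
    linarith
  have hu1 : 1 - a ^ 2 ≤ 1 := by nlinarith [norm_nonneg x]
  have hw1 : 1 - b ^ 2 ≤ 1 := by nlinarith [norm_nonneg y]
  have hsq := aux_sqrt_diff k (1 - a^2) (1 - b^2) hu hw hu1 hw1
  -- distance computation
  have hd2 : dist (capMap k i ε x) (capMap k i ε y) ^ 2 =
      (ε * Real.sqrt (1 - a^2) - ε * Real.sqrt (1 - b^2)) ^ 2 + dist x y ^ 2 := by
    rw [aux_distsq]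
    rw [Fin.sum_univ_succAbove _ i]
    congr 1
    · simp [capMap, ha, hb]
    · rw [aux_distsq]
      apply Finset.sum_congr rfl
      intro j _
      simp [capMap]
  have hε2 : ε ^ 2 = 1 := by rcases hε with h | h <;> simp [h]
  have habd : (a - b) ^ 2 ≤ dist x y ^ 2 := by
    have h1 : |a - b| ≤ dist x y := abs_norm_sub_norm_le x y
    have := sq_abs (a - b)
    nlinarith [abs_nonneg (a-b), dist_nonneg (x := x) (y := y)]
  have hab2 : ((1 - a^2) - (1 - b^2)) ^ 2 ≤ 4 * dist x y ^ 2 := by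
    have h1 : ((1 - a^2) - (1 - b^2)) ^ 2 = (a+b)^2 * (a-b)^2 := by ring
    have ha1 : a ≤ 1 := by nlinarith [norm_nonneg x]
    have hb1 : b ≤ 1 := by nlinarith [norm_nonneg y]
    have ha0 : 0 ≤ a := norm_nonneg x
    have hb0 : 0 ≤ b := norm_nonneg y
    rw [h1]
    have h2 : (a+b)^2 ≤ 4 := by nlinarith
    calc (a+b)^2*(a-b)^2 ≤ 4 * (a-b)^2 := mul_le_mul_of_nonneg_right h2 (sq_nonneg _)
      _ ≤ 4 * dist x y ^ 2 := by linarith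
  have hd2le : dist (capMap k i ε x) (capMap k i ε y) ^ 2 ≤
      ((k:ℝ)+2)^2 * dist x y ^ 2 := by
    rw [hd2]
    have h1 : (ε * Real.sqrt (1 - a^2) - ε * Real.sqrt (1 - b^2)) ^ 2 =
        (Real.sqrt (1 - a^2) - Real.sqrt (1 - b^2)) ^ 2 := by
      have : (ε * Real.sqrt (1 - a^2) - ε * Real.sqrt (1 - b^2)) ^ 2 =
        ε^2 * (Real.sqrt (1 - a^2) - Real.sqrt (1 - b^2)) ^ 2 := by ring
      rw [this, hε2, one_mul]
    rw [h1]
    have hk0 : (1:ℝ) ≤ k := by exact_mod_cast hk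
    have h3 : (Real.sqrt (1 - a^2) - Real.sqrt (1 - b^2)) ^ 2 ≤
        4 * ((k:ℝ)+1) * dist x y ^ 2 := by
      have h4 : ((k:ℝ)+1) * ((1 - a^2) - (1 - b^2)) ^ 2 ≤
          ((k:ℝ)+1) * (4 * dist x y ^ 2) :=
        mul_le_mul_of_nonneg_left hab2 (by positivity)
      nlinarith [hsq]
    nlinarith [sq_nonneg (dist x y)]
  have hfinal : dist (capMap k i ε x) (capMap k i ε y) ≤ ((k:ℝ)+2) * dist x y := by
    have h2 := Real.sqrt_le_sqrt hd2le
    rwa [Real.sqrt_sq dist_nonneg, show ((k:ℝ)+2)^2 * dist x y ^2 = (((k:ℝ)+2) * dist x y)^2 by ring,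
      Real.sqrt_sq (by positivity)] at h2
  calc dist (capMap k i ε x) (capMap k i ε y) ≤ ((k:ℝ)+2) * dist x y := hfinal
    _ = (((k:ℝ≥0)+2) : ℝ) * dist x y := by push_cast; ring

noncomputable def projMap (k : ℕ) (i : Fin (k+1)) (η : EuclideanSpace ℝ (Fin (k+1))) :
    EuclideanSpace ℝ (Fin k) :=
  WithLp.toLp 2 (fun j => η (i.succAbove j))

def capSet (k : ℕ) (i : Fin (k+1)) (ε : ℝ) : Set (EuclideanSpace ℝ (Fin (k+1))) :=
  {η | η ∈ Metric.sphere (0 : EuclideanSpace ℝ (Fin (k+1))) 1 ∧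
    Real.sqrt (1/((k:ℝ)+1)) ≤ ε * η i}

lemma aux_sphere_sumsq (k : ℕ) (η : EuclideanSpace ℝ (Fin k))
    (hη : η ∈ Metric.sphere (0 : EuclideanSpace ℝ (Fin k)) 1) : ∑ j, η j ^ 2 = 1 := by
  have h1 : ‖η‖ = 1 := by simpa [mem_sphere_zero_iff_norm] using hη
  have := aux_normsq k η
  rw [h1] at this
  linarith

lemma aux_cap_subset (k : ℕ) (i : Fin (k+1)) (ε : ℝ) (hε : ε = 1 ∨ ε = -1) :
    capSet k i ε ⊆ capMap k i ε '' {x : EuclideanSpace ℝ (Fin k) | ‖x‖ ^ 2 ≤ (k:ℝ)/((k:ℝ)+1)} := by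
  rintro η ⟨hsph, hcap⟩
  set x : EuclideanSpace ℝ (Fin k) := WithLp.toLp 2 (fun j => η (i.succAbove j)) with hxdef
  have hsum : ∑ j, η j ^ 2 = 1 := aux_sphere_sumsq (k+1) η hsph
  have hsplit : η i ^ 2 + ∑ j : Fin k, η (i.succAbove j) ^ 2 = 1 := by
    rw [← Fin.sum_univ_succAbove (fun j => η j ^ 2) i]; exact hsum
  have hxnorm : ‖x‖ ^ 2 = ∑ j : Fin k, η (i.succAbove j) ^ 2 := by
    rw [aux_normsq]
  have hcpos : (0:ℝ) < Real.sqrt (1/((k:ℝ)+1)) := Real.sqrt_pos.mpr (by positivity)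
  have hc2 : Real.sqrt (1/((k:ℝ)+1)) ^ 2 = 1/((k:ℝ)+1) := Real.sq_sqrt (by positivity)
  have hηi2 : 1/((k:ℝ)+1) ≤ η i ^ 2 := by
    have h1 : Real.sqrt (1/((k:ℝ)+1)) ^ 2 ≤ (ε * η i) ^ 2 := by
      apply pow_le_pow_left₀ hcpos.le hcap
    have hε2 : ε ^ 2 = 1 := by rcases hε with h | h <;> simp [h]
    calc 1/((k:ℝ)+1) = Real.sqrt (1/((k:ℝ)+1)) ^ 2 := hc2.symm
      _ ≤ (ε * η i) ^ 2 := h1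
      _ = ε ^ 2 * η i ^ 2 := by ring
      _ = η i ^ 2 := by rw [hε2, one_mul]
  refine ⟨x, ?_, ?_⟩
  · show ‖x‖ ^ 2 ≤ (k:ℝ)/((k:ℝ)+1)
    have : (k:ℝ)/((k:ℝ)+1) = 1 - 1/((k:ℝ)+1) := by field_simp; ring
    rw [this, hxnorm]
    linarith
  · have h1mx : 1 - ‖x‖ ^ 2 = η i ^ 2 := by rw [hxnorm]; linarith
    have hsqx : Real.sqrt (1 - ‖x‖ ^ 2) = |η i| := by
      rw [h1mx, Real.sqrt_sq_eq_abs]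
    have hεηpos : 0 < ε * η i := lt_of_lt_of_le hcpos hcap
    have hsign : ε * |η i| = η i := by
      rcases hε with h | h
      · rw [h, one_mul] at hεηpos ⊢
        exact abs_of_pos hεηpos
      · rw [h] at hεηpos ⊢
        have : η i < 0 := by linarith
        rw [abs_of_neg this]; ring
    ext j
    refine Fin.succAboveCases i ?_ ?_ j
    · show (capMap k i ε x) i = η i
      rw [capMap, PiLp.toLp_apply, Fin.insertNth_apply_same, hsqx, hsign]
    · intro j'
      show (capMap k i ε x) (i.succAbove j') = η (i.succAbove j')
      rw [capMap, PiLp.toLp_apply, Fin.insertNth_apply_succAbove]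

lemma aux_cover (k : ℕ) :
    Metric.sphere (0 : EuclideanSpace ℝ (Fin (k+1))) 1 ⊆
      ⋃ i : Fin (k+1), (capSet k i 1 ∪ capSet k i (-1)) := by
  intro η hη
  have hsum : ∑ j, η j ^ 2 = 1 := aux_sphere_sumsq (k+1) η hη
  have hex : ∃ i, 1/((k:ℝ)+1) ≤ η i ^ 2 := by
    by_contra hcon
    push_neg at hcon
    have h1 : ∑ j, η j ^ 2 < ∑ _j : Fin (k+1), 1/((k:ℝ)+1) :=
      Finset.sum_lt_sum_of_nonempty ⟨0, Finset.mem_univ 0⟩ (fun j _ => hcon j)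
    rw [Finset.sum_const, Finset.card_univ, Fintype.card_fin, nsmul_eq_mul] at h1
    have h2 : ((k:ℝ)+1) * (1/((k:ℝ)+1)) = 1 := by field_simp
    rw [hsum] at h1
    push_cast at h1
    linarith
  obtain ⟨i, hi⟩ := hex
  have habs : Real.sqrt (1/((k:ℝ)+1)) ≤ |η i| := by
    calc Real.sqrt (1/((k:ℝ)+1)) ≤ Real.sqrt (η i ^ 2) := Real.sqrt_le_sqrt hi
      _ = |η i| := Real.sqrt_sq_eq_abs _
  refine Set.mem_iUnion.mpr ⟨i, ?_⟩
  rcases le_or_gt 0 (η i) with h | h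
  · left
    exact ⟨hη, by rwa [one_mul, ← abs_of_nonneg h]⟩
  · right
    refine ⟨hη, ?_⟩
    rw [neg_one_mul, ← abs_of_neg h]
    exact habs
lemma aux_muH_closedBall_lt_top (k : ℕ) (r : ℝ) :
    μH[(k:ℝ)] (closedBall (0 : EuclideanSpace ℝ (Fin k)) r) < ⊤ := by
  set f := ⇑(WithLp.equiv 2 (∀ _ : Fin k, ℝ)) with hf
  have hanti : AntilipschitzWith ((Fintype.card (Fin k) : ℝ≥0) ^ ((1:ℝ≥0∞)/2).toReal) f :=
    PiLp.antilipschitzWith_ofLp 2 (fun _ : Fin k => ℝ)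
  have hlip : LipschitzWith 1 f := PiLp.lipschitzWith_ofLp 2 (fun _ : Fin k => ℝ)
  have h1 := hanti.le_hausdorffMeasure_image (Nat.cast_nonneg k)
    (closedBall (0 : EuclideanSpace ℝ (Fin k)) r)
  have himg : f '' closedBall (0 : EuclideanSpace ℝ (Fin k)) r ⊆
      closedBall (0 : ∀ _ : Fin k, ℝ) r := by
    rintro y ⟨x, hx, rfl⟩
    have : dist (f x) (f 0) ≤ dist x 0 := by
      simpa using hlip.dist_le_mul x 0
    have hf0 : f 0 = 0 := rfl
    rw [mem_closedBall]
    calc dist (f x) 0 = dist (f x) (f 0) := by rw [hf0]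
    _ ≤ dist x 0 := this
    _ ≤ r := by simpa [mem_closedBall] using hx
  have hpi : (μH[(k:ℝ)] : Measure (∀ _ : Fin k, ℝ)) = volume := by
    have := @hausdorffMeasure_pi_real (Fin k) _
    simpa using this
  calc μH[(k:ℝ)] (closedBall (0 : EuclideanSpace ℝ (Fin k)) r)
      ≤ _ := h1
    _ < ⊤ := by
        apply ENNReal.mul_lt_top
        · exact ENNReal.rpow_lt_top_of_nonneg (Nat.cast_nonneg k) ENNReal.coe_ne_top
        · calc μH[(k:ℝ)] (f '' closedBall (0 : EuclideanSpace ℝ (Fin k)) r)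
              ≤ μH[(k:ℝ)] (closedBall (0 : ∀ _ : Fin k, ℝ) r) := measure_mono himg
          _ = volume (closedBall (0 : ∀ _ : Fin k, ℝ) r) := by rw [hpi]
          _ < ⊤ := measure_closedBall_lt_top
lemma aux_muH_ball_pos (k : ℕ) (hk : 1 ≤ k) (r : ℝ) (hr : 0 < r) :
    0 < μH[(k:ℝ)] (ball (0 : EuclideanSpace ℝ (Fin k)) r) := by
  set f := ⇑(WithLp.equiv 2 (∀ _ : Fin k, ℝ)) with hfdef
  have hanti : AntilipschitzWith ((Fintype.card (Fin k) : ℝ≥0) ^ ((1:ℝ≥0∞)/2).toReal) f :=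
    PiLp.antilipschitzWith_ofLp 2 (fun _ : Fin k => ℝ)
  have hlip : LipschitzWith 1 f := PiLp.lipschitzWith_ofLp 2 (fun _ : Fin k => ℝ)
  set K : ℝ≥0 := (Fintype.card (Fin k) : ℝ≥0) ^ ((1:ℝ≥0∞)/2).toReal with hK
  set r' : ℝ := r / (K + 1) with hr'
  have hr'pos : 0 < r' := by positivity
  have hsub : ball (0 : ∀ _ : Fin k, ℝ) r' ⊆ f '' ball (0 : EuclideanSpace ℝ (Fin k)) r := by
    intro y hy
    set x : EuclideanSpace ℝ (Fin k) := (WithLp.equiv 2 (∀ _ : Fin k, ℝ)).symm y with hx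
    have hfx : f x = y := by simp [hfdef, hx]
    refine ⟨x, ?_, hfx⟩
    have h1 : dist x 0 ≤ K * dist (f x) (f 0) := hanti.le_mul_dist x 0
    have hf0 : f (0 : EuclideanSpace ℝ (Fin k)) = 0 := rfl
    rw [mem_ball]
    have hy' : dist y 0 < r' := by simpa [mem_ball] using hy
    have hKr : (K : ℝ) * r' < r := by
      have h2 : (K : ℝ) < K + 1 := by linarith [K.coe_nonneg]
      have h3 : (K : ℝ) * r' < (K + 1) * r' ∨ (K:ℝ) * r' = 0 := by
        rcases eq_or_lt_of_le (le_of_eq (rfl : (0:ℝ) = 0)) with h | h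
        · by_cases hK0 : (K:ℝ) = 0
          · right; rw [hK0]; ring
          · left
            exact mul_lt_mul_of_pos_right h2 hr'pos
        · left; exact mul_lt_mul_of_pos_right h2 hr'pos
      have h4 : ((K:ℝ) + 1) * r' = r := by
        rw [hr']; field_simp
      rcases h3 with h | h
      · linarith
      · rw [h]; exact hr
    calc dist x 0 ≤ K * dist (f x) (f 0) := h1
      _ = K * dist y 0 := by rw [hfx, hf0]
      _ ≤ K * r' := by
          apply mul_le_mul_of_nonneg_left (le_of_lt hy') K.coe_nonneg
      _ < r := hKr
  have hpi : (μH[(k:ℝ)] : Measure (∀ _ : Fin k, ℝ)) = volume := by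
    have := @hausdorffMeasure_pi_real (Fin k) _
    simpa using this
  have h0 : (0:ℝ≥0∞) < volume (ball (0 : ∀ _ : Fin k, ℝ) r') := by
    have : Nonempty (Fin k) := ⟨⟨0, by omega⟩⟩
    exact measure_ball_pos _ _ hr'pos
  have h5 : volume (ball (0 : ∀ _ : Fin k, ℝ) r') ≤
      μH[(k:ℝ)] (f '' ball (0 : EuclideanSpace ℝ (Fin k)) r) := by
    rw [← hpi]; exact measure_mono hsub
  have h6 := hlip.hausdorffMeasure_image_le (Nat.cast_nonneg k)
    (ball (0 : EuclideanSpace ℝ (Fin k)) r)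
  calc (0:ℝ≥0∞) < volume (ball (0 : ∀ _ : Fin k, ℝ) r') := h0
    _ ≤ μH[(k:ℝ)] (f '' ball (0 : EuclideanSpace ℝ (Fin k)) r) := h5
    _ ≤ (1:ℝ≥0) ^ (k:ℝ) * μH[(k:ℝ)] (ball (0 : EuclideanSpace ℝ (Fin k)) r) := h6
    _ = μH[(k:ℝ)] (ball (0 : EuclideanSpace ℝ (Fin k)) r) := by
        simp

lemma aux_capSet_lt_top (k : ℕ) (hk : 1 ≤ k) (i : Fin (k+1)) (ε : ℝ) (hε : ε = 1 ∨ ε = -1) :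
    μH[(k:ℝ)] (capSet k i ε) < ⊤ := by
  have h1 : capSet k i ε ⊆ capMap k i ε '' {x : EuclideanSpace ℝ (Fin k) |
      ‖x‖ ^ 2 ≤ (k:ℝ)/((k:ℝ)+1)} := aux_cap_subset k i ε hε
  have h2 := (aux_capMap_lip k hk i ε hε).hausdorffMeasure_image_le (Nat.cast_nonneg k)
  have h3 : {x : EuclideanSpace ℝ (Fin k) | ‖x‖ ^ 2 ≤ (k:ℝ)/((k:ℝ)+1)} ⊆
      Metric.closedBall (0 : EuclideanSpace ℝ (Fin k)) 1 := by
    intro x hx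
    have hx' : ‖x‖ ^ 2 ≤ (k:ℝ)/((k:ℝ)+1) := hx
    have h4 : (k:ℝ)/((k:ℝ)+1) ≤ 1 := by
      rw [div_le_one (by positivity)]; linarith
    rw [Metric.mem_closedBall, dist_zero_right]
    nlinarith [norm_nonneg x]
  calc μH[(k:ℝ)] (capSet k i ε) ≤ μH[(k:ℝ)] (capMap k i ε ''
        {x : EuclideanSpace ℝ (Fin k) | ‖x‖ ^ 2 ≤ (k:ℝ)/((k:ℝ)+1)}) := measure_mono h1
    _ ≤ ((k:ℝ≥0)+2) ^ (k:ℝ) * μH[(k:ℝ)] {x : EuclideanSpace ℝ (Fin k) |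
          ‖x‖ ^ 2 ≤ (k:ℝ)/((k:ℝ)+1)} := h2
    _ ≤ ((k:ℝ≥0)+2) ^ (k:ℝ) * μH[(k:ℝ)] (Metric.closedBall (0 : EuclideanSpace ℝ (Fin k)) 1) :=
        mul_le_mul_right (measure_mono h3) _
    _ < ⊤ := ENNReal.mul_lt_top
        (ENNReal.rpow_lt_top_of_nonneg (Nat.cast_nonneg k) ENNReal.coe_ne_top)
        (aux_muH_closedBall_lt_top k 1)

lemma aux_sphere_lt_top (k : ℕ) (hk : 1 ≤ k) :
    μH[(k:ℝ)] (Metric.sphere (0 : EuclideanSpace ℝ (Fin (k+1))) 1) < ⊤ := by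
  calc μH[(k:ℝ)] (Metric.sphere (0 : EuclideanSpace ℝ (Fin (k+1))) 1)
      ≤ μH[(k:ℝ)] (⋃ i : Fin (k+1), (capSet k i 1 ∪ capSet k i (-1))) :=
        measure_mono (aux_cover k)
    _ ≤ ∑ i : Fin (k+1), μH[(k:ℝ)] (capSet k i 1 ∪ capSet k i (-1)) :=
        measure_iUnion_fintype_le _ _
    _ < ⊤ := by
        apply ENNReal.sum_lt_top.mpr
        intro i _
        calc μH[(k:ℝ)] (capSet k i 1 ∪ capSet k i (-1))
            ≤ μH[(k:ℝ)] (capSet k i 1) + μH[(k:ℝ)] (capSet k i (-1)) := measure_union_le _ _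
          _ < ⊤ := ENNReal.add_lt_top.mpr
              ⟨aux_capSet_lt_top k hk i 1 (Or.inl rfl), aux_capSet_lt_top k hk i (-1) (Or.inr rfl)⟩

lemma aux_projMap_lip (k : ℕ) (i : Fin (k+1)) : LipschitzWith 1 (projMap k i) := by
  apply LipschitzWith.of_dist_le_mul
  intro a b
  rw [NNReal.coe_one, one_mul]
  have h1 : dist (projMap k i a) (projMap k i b) ^ 2 ≤ dist a b ^ 2 := by
    rw [aux_distsq, aux_distsq]
    rw [Fin.sum_univ_succAbove (fun j => (a j - b j) ^ 2) i]
    have h2 : ∑ j : Fin k, (projMap k i a j - projMap k i b j) ^ 2 =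
        ∑ j : Fin k, (a (i.succAbove j) - b (i.succAbove j)) ^ 2 := rfl
    rw [h2]
    nlinarith [sq_nonneg (a i - b i)]
  have h3 := Real.sqrt_le_sqrt h1
  rwa [Real.sqrt_sq dist_nonneg, Real.sqrt_sq dist_nonneg] at h3

lemma aux_capSet_pos (k : ℕ) (hk : 1 ≤ k) (i : Fin (k+1)) :
    0 < μH[(k:ℝ)] (capSet k i 1) := by
  set c : ℝ := Real.sqrt (1/((k:ℝ)+1)) with hc
  have hcpos : 0 < c := Real.sqrt_pos.mpr (by positivity)
  have hc2 : c ^ 2 = 1/((k:ℝ)+1) := Real.sq_sqrt (by positivity)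
  have hsub : Metric.ball (0 : EuclideanSpace ℝ (Fin k)) c ⊆ projMap k i '' capSet k i 1 := by
    intro x hx
    have hxc : ‖x‖ < c := by simpa [mem_ball_zero_iff] using hx
    have hx2 : ‖x‖ ^ 2 < 1/((k:ℝ)+1) := by
      rw [← hc2]
      exact pow_lt_pow_left₀ hxc (norm_nonneg x) two_ne_zero
    have hk1 : 1/((k:ℝ)+1) ≤ (k:ℝ)/((k:ℝ)+1) := by
      have hk' : (1:ℝ) ≤ (k:ℝ) := by exact_mod_cast hk
      gcongr
    have h1x : (0:ℝ) ≤ 1 - ‖x‖ ^ 2 := by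
      have : 1/((k:ℝ)+1) ≤ 1 := by
        rw [div_le_one (by positivity)]; linarith [Nat.cast_nonneg (α := ℝ) k]
      nlinarith
    set η := capMap k i 1 x with hη
    have hsq : Real.sqrt (1 - ‖x‖^2) ^ 2 = 1 - ‖x‖^2 := Real.sq_sqrt h1x
    have hηsum : ∑ j, η j ^ 2 = 1 := by
      rw [Fin.sum_univ_succAbove (fun j => η j ^ 2) i]
      have ha : η i = 1 * Real.sqrt (1 - ‖x‖^2) := by
        rw [hη, capMap, PiLp.toLp_apply, Fin.insertNth_apply_same]
      have hb : ∑ j : Fin k, η (i.succAbove j) ^ 2 = ‖x‖ ^ 2 := by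
        rw [aux_normsq]
        apply Finset.sum_congr rfl
        intro j _
        rw [hη, capMap, PiLp.toLp_apply, Fin.insertNth_apply_succAbove]
      rw [ha, hb, one_mul, hsq]
      ring
    have hηsph : η ∈ Metric.sphere (0 : EuclideanSpace ℝ (Fin (k+1))) 1 := by
      rw [mem_sphere_zero_iff_norm]
      have := aux_normsq (k+1) η
      rw [hηsum] at this
      nlinarith [norm_nonneg η]
    have hηcap : c ≤ 1 * η i := by
      rw [one_mul, hη, capMap, PiLp.toLp_apply, Fin.insertNth_apply_same]
      simp only [one_mul]
      rw [hc]
      apply Real.sqrt_le_sqrt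
      have heq : (k:ℝ)/((k:ℝ)+1) = 1 - 1/((k:ℝ)+1) := by field_simp; ring
      rw [heq] at hk1
      linarith
    refine ⟨η, ⟨hηsph, hηcap⟩, ?_⟩
    ext j
    show η (i.succAbove j) = x j
    rw [hη, capMap, PiLp.toLp_apply, Fin.insertNth_apply_succAbove]
  have h1 := (aux_projMap_lip k i).hausdorffMeasure_image_le (Nat.cast_nonneg k) (capSet k i 1)
  calc (0:ℝ≥0∞) < μH[(k:ℝ)] (Metric.ball (0 : EuclideanSpace ℝ (Fin k)) c) :=
        aux_muH_ball_pos k hk c hcpos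
    _ ≤ μH[(k:ℝ)] (projMap k i '' capSet k i 1) := measure_mono hsub
    _ ≤ (1:ℝ≥0) ^ (k:ℝ) * μH[(k:ℝ)] (capSet k i 1) := h1
    _ = μH[(k:ℝ)] (capSet k i 1) := by simp

/-- The volume of the unit ball in `ℝ^n`. -/
noncomputable def ballVol (n : ℕ) : ℝ :=
  (volume (Metric.ball (0 : EuclideanSpace ℝ (Fin n)) 1)).toReal

/-- The Poisson kernel of the unit ball `B_1 ⊂ ℝ^n`. -/
noncomputable def poissonKernelBall (n : ℕ) (η ξ : EuclideanSpace ℝ (Fin n)) : ℝ :=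
  (1 - ‖ξ‖ ^ 2) / ((n : ℝ) * ballVol n * ‖ξ - η‖ ^ n)

/-- The Poisson extension to the unit ball of a boundary function `v`, against the
`(n-1)`-dimensional Hausdorff measure on the unit sphere. -/
noncomputable def poissonExtBall (n : ℕ) (v : EuclideanSpace ℝ (Fin n) → ℝ)
    (ξ : EuclideanSpace ℝ (Fin n)) : ℝ :=
  ∫ η in Metric.sphere (0 : EuclideanSpace ℝ (Fin n)) 1,
    poissonKernelBall n η ξ * v η ∂μH[(n : ℝ) - 1]

/-- for `K(ξ) = ξ_n + 2` (here `n = m + 1 ≥ 3`), the integral equation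
`K(η) v(η)^{n/(n-2)} = ∫_{B_1} P(η,ξ) (Pv(ξ))^{(n+2)/(n-2)} dξ` has no positive continuous
solution, assuming the Kazdan–Warner identity
`∫_{∂B_1} (∇_X K) v^{2(n-1)/(n-2)} ds = 0` for every positive solution, with `X` the
(tangential) gradient field of `ξ ↦ ξ_n` on the sphere, for which `∇_X K(η) = 1 − η_n²`. -/
theorem stmt7 (m : ℕ) (hm : 2 ≤ m)
    (K : EuclideanSpace ℝ (Fin (m + 1)) → ℝ) (hK : ∀ ξ, K ξ = ξ (Fin.last m) + 2)
    (hKW : ∀ v : EuclideanSpace ℝ (Fin (m + 1)) → ℝ,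
      ContinuousOn v (Metric.sphere (0 : EuclideanSpace ℝ (Fin (m + 1))) 1) →
      (∀ η ∈ Metric.sphere (0 : EuclideanSpace ℝ (Fin (m + 1))) 1, 0 < v η) →
      (∀ η ∈ Metric.sphere (0 : EuclideanSpace ℝ (Fin (m + 1))) 1,
        K η * v η ^ (((m : ℝ) + 1) / ((m : ℝ) - 1)) =
          ∫ ξ in Metric.ball (0 : EuclideanSpace ℝ (Fin (m + 1))) 1,
            poissonKernelBall (m + 1) η ξ *
              poissonExtBall (m + 1) v ξ ^ (((m : ℝ) + 3) / ((m : ℝ) - 1))) →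
      ∫ η in Metric.sphere (0 : EuclideanSpace ℝ (Fin (m + 1))) 1,
        (1 - (η (Fin.last m)) ^ 2) * v η ^ ((2 * (m : ℝ)) / ((m : ℝ) - 1)) ∂μH[(m : ℝ)] = 0) :
    ¬ ∃ v : EuclideanSpace ℝ (Fin (m + 1)) → ℝ,
      ContinuousOn v (Metric.sphere (0 : EuclideanSpace ℝ (Fin (m + 1))) 1) ∧
      (∀ η ∈ Metric.sphere (0 : EuclideanSpace ℝ (Fin (m + 1))) 1, 0 < v η) ∧
      (∀ η ∈ Metric.sphere (0 : EuclideanSpace ℝ (Fin (m + 1))) 1,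
        K η * v η ^ (((m : ℝ) + 1) / ((m : ℝ) - 1)) =
          ∫ ξ in Metric.ball (0 : EuclideanSpace ℝ (Fin (m + 1))) 1,
            poissonKernelBall (m + 1) η ξ *
              poissonExtBall (m + 1) v ξ ^ (((m : ℝ) + 3) / ((m : ℝ) - 1))) := by
  rintro ⟨v, hvc, hvp, hveq⟩
  have h0 := hKW v hvc hvp hveq
  set S := Metric.sphere (0 : EuclideanSpace ℝ (Fin (m+1))) 1 with hS
  have hms : MeasurableSet S := isClosed_sphere.measurableSet
  set f : EuclideanSpace ℝ (Fin (m+1)) → ℝ :=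
    fun η => (1 - (η (Fin.last m)) ^ 2) * v η ^ ((2 * (m:ℝ)) / ((m:ℝ) - 1)) with hf
  have hfc : ContinuousOn f S := by
    apply ContinuousOn.mul
    · have hc1 : Continuous fun η : EuclideanSpace ℝ (Fin (m+1)) => η (Fin.last m) :=
        (EuclideanSpace.proj (Fin.last m)).continuous
      exact (continuous_const.sub (hc1.pow 2)).continuousOn
    · exact hvc.rpow_const (fun η hη => Or.inl (hvp η hη).ne')
  have hfnn : ∀ η ∈ S, 0 ≤ f η := by
    intro η hη
    have hsum := aux_sphere_sumsq (m+1) η hη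
    have h1 : η (Fin.last m) ^ 2 ≤ 1 := by
      have h2 : η (Fin.last m) ^ 2 ≤ ∑ j, η j ^ 2 := Finset.single_le_sum (f := fun j => η j ^ 2)
        (fun j _ => sq_nonneg _) (Finset.mem_univ (Fin.last m))
      linarith
    have h2 : 0 < v η ^ ((2 * (m:ℝ)) / ((m:ℝ) - 1)) := Real.rpow_pos_of_pos (hvp η hη) _
    exact mul_nonneg (by linarith) h2.le
  have hae : 0 ≤ᵐ[μH[(m:ℝ)].restrict S] f := ae_restrict_of_forall_mem hms hfnn
  obtain ⟨C, hC⟩ := (isCompact_sphere (0 : EuclideanSpace ℝ (Fin (m+1))) 1).exists_bound_of_continuousOn hfc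
  have hSfin : μH[(m:ℝ)] S ≠ ⊤ := (aux_sphere_lt_top m (by omega)).ne
  have hfin : IsFiniteMeasure (μH[(m:ℝ)].restrict S) :=
    ⟨by rw [Measure.restrict_apply_univ]; exact aux_sphere_lt_top m (by omega)⟩
  have hmeas : AEStronglyMeasurable f (μH[(m:ℝ)].restrict S) := hfc.aestronglyMeasurable hms
  have hint : IntegrableOn f S μH[(m:ℝ)] := by
    refine Integrable.mono' (integrable_const C) hmeas ?_
    exact ae_restrict_of_forall_mem hms hC
  have hsupp : capSet m 0 1 ⊆ Function.support f ∩ S := by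
    rintro η ⟨hsph, hcap⟩
    refine ⟨?_, hsph⟩
    have hne0 : (0 : Fin (m+1)) ≠ Fin.last m := by
      simp only [ne_eq, Fin.ext_iff, Fin.val_zero, Fin.val_last]
      omega
    have hsum := aux_sphere_sumsq (m+1) η hsph
    have hpair : η 0 ^ 2 + η (Fin.last m) ^ 2 ≤ 1 := by
      have h1 : ∑ j ∈ ({0, Fin.last m} : Finset (Fin (m+1))), η j ^ 2 ≤ ∑ j, η j ^ 2 :=
        Finset.sum_le_sum_of_subset_of_nonneg (Finset.subset_univ _) (fun j _ _ => sq_nonneg _)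
      rw [Finset.sum_pair hne0] at h1
      linarith
    have hcap' : 1/((m:ℝ)+1) ≤ η 0 ^ 2 := by
      have hc2 : Real.sqrt (1/((m:ℝ)+1)) ^ 2 = 1/((m:ℝ)+1) := Real.sq_sqrt (by positivity)
      have h3 : Real.sqrt (1/((m:ℝ)+1)) ^ 2 ≤ (1 * η 0) ^ 2 :=
        pow_le_pow_left₀ (Real.sqrt_nonneg _) hcap 2
      rw [hc2, one_mul] at h3
      exact h3
    have hlast : η (Fin.last m) ^ 2 < 1 := by
      have : (0:ℝ) < 1/((m:ℝ)+1) := by positivity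
      linarith
    have hfpos : 0 < f η :=
      mul_pos (by linarith) (Real.rpow_pos_of_pos (hvp η hsph) _)
    exact Function.mem_support.mpr hfpos.ne'
  have hμpos : 0 < μH[(m:ℝ)] (Function.support f ∩ S) :=
    lt_of_lt_of_le (aux_capSet_pos m (by omega) 0) (measure_mono hsupp)
  have key : 0 < ∫ η in S, f η ∂μH[(m:ℝ)] :=
    (setIntegral_pos_iff_support_of_nonneg_ae hae hint).mpr hμpos
  exact key.ne' h0
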